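/- Let x^0 ∈ R^n and let d^1,…,d^p be nonzero vectors. Suppose f : R^n → R is C^2 with L-Lipschitz Hessian, and suppose (α, H) ∈ R^n × S_n(R) satisfies the interpolation conditions (d^i)ᵀα + (1/2)(d^i)ᵀH d^i = f(x^0+d^i) − f(x^0) and −(d^i)ᵀα + (1/2)(d^i)ᵀH d^i = f(x^0−d^i) − f(x^0) for all i. Then for each i, |(d^i/||d^i||)ᵀ (H − ∇²f(x^0)) (d^i/||d^i||)| ≤ (L/3) max_j ||d^j||. -/

import Mathlib

open Matrix
open scoped RealInnerProductSpace

noncomputable section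

abbrev Eu (n : ℕ) := EuclideanSpace ℝ (Fin n)

def IsMP {a b : ℕ} (A : Matrix (Fin a) (Fin b) ℝ) (A' : Matrix (Fin b) (Fin a) ℝ) : Prop :=
  A * A' * A = A ∧ A' * A * A' = A' ∧ (A * A')ᵀ = A * A' ∧ (A' * A)ᵀ = A' * A

def euclNorm {k : ℕ} (v : Fin k → ℝ) : ℝ := Real.sqrt (∑ i, v i ^ 2)

def spNorm {a b : ℕ} (A : Matrix (Fin a) (Fin b) ℝ) : ℝ :=
  ⨆ v : {v : Fin b → ℝ // euclNorm v ≤ 1}, euclNorm (A.mulVec v.1)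

def frobNorm {a b : ℕ} (A : Matrix (Fin a) (Fin b) ℝ) : ℝ :=
  Real.sqrt (∑ i, ∑ j, A i j ^ 2)

def mat1Norm {a b : ℕ} (A : Matrix (Fin a) (Fin b) ℝ) : ℝ := ⨆ j, ∑ i, |A i j|


lemma euclNorm_eq {k : ℕ} (v : Fin k → ℝ) :
    euclNorm v = ‖(WithLp.equiv 2 (Fin k → ℝ)).symm v‖ := by
  rw [EuclideanSpace.norm_eq]
  simp [euclNorm, Real.norm_eq_abs, sq_abs]

lemma clm_norm_le {k : ℕ} (A : Matrix (Fin k) (Fin k) ℝ) (v : EuclideanSpace ℝ (Fin k)) :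
    ‖toEuclideanCLM (𝕜 := ℝ) A v‖ ≤ spNorm A * ‖v‖ := by
  set T := toEuclideanCLM (𝕜 := ℝ) A with hT
  have key : ∀ w : Fin k → ℝ,
      euclNorm (A.mulVec w) = ‖T ((WithLp.equiv 2 (Fin k → ℝ)).symm w)‖ := by
    intro w
    rw [euclNorm_eq, hT]; rfl
  have hbdd : BddAbove (Set.range fun v : {v : Fin k → ℝ // euclNorm v ≤ 1} =>
      euclNorm (A.mulVec v.1)) := by
    refine ⟨‖T‖, ?_⟩
    rintro x ⟨w, rfl⟩
    show euclNorm (A.mulVec w.1) ≤ ‖T‖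
    rw [key]
    calc ‖T ((WithLp.equiv 2 (Fin k → ℝ)).symm w.1)‖
        ≤ ‖T‖ * ‖(WithLp.equiv 2 (Fin k → ℝ)).symm w.1‖ := T.le_opNorm _
      _ ≤ ‖T‖ * 1 := by
          have := w.2
          rw [euclNorm_eq] at this
          exact mul_le_mul_of_nonneg_left this (norm_nonneg _)
      _ = ‖T‖ := mul_one _
  rcases eq_or_ne v 0 with rfl | hv
  · simp
  · have hv' : (0:ℝ) < ‖v‖ := norm_pos_iff.2 hv
    set w : Fin k → ℝ := WithLp.equiv 2 (Fin k → ℝ) (‖v‖⁻¹ • v) with hw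
    have hwe : (WithLp.equiv 2 (Fin k → ℝ)).symm w = ‖v‖⁻¹ • v := by
      simp [hw]
    have hwn : euclNorm w ≤ 1 := by
      rw [euclNorm_eq, hwe, norm_smul]
      simp [abs_of_pos (inv_pos.2 hv'), inv_mul_cancel₀ (ne_of_gt hv')]
    have := le_ciSup hbdd ⟨w, hwn⟩
    rw [key, hwe] at this
    have h2 : ‖T (‖v‖⁻¹ • v)‖ = ‖v‖⁻¹ * ‖T v‖ := by
      rw [T.map_smul, norm_smul, Real.norm_eq_abs, abs_of_pos (inv_pos.2 hv')]
    rw [h2] at this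
    calc ‖T v‖ = ‖v‖ * (‖v‖⁻¹ * ‖T v‖) := by field_simp
      _ ≤ ‖v‖ * spNorm A := mul_le_mul_of_nonneg_left this (le_of_lt hv')
      _ = spNorm A * ‖v‖ := mul_comm _ _

lemma taylor_core {n : ℕ} (f : EuclideanSpace ℝ (Fin n) → ℝ) (g : EuclideanSpace ℝ (Fin n) → EuclideanSpace ℝ (Fin n))
    (Hf : EuclideanSpace ℝ (Fin n) → Matrix (Fin n) (Fin n) ℝ) (L : ℝ) (hL : 0 ≤ L)
    (hgrad : ∀ x, HasGradientAt f (g x) x)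
    (hhess : ∀ x, HasFDerivAt g (Matrix.toEuclideanCLM (𝕜 := ℝ) (Hf x)) x)
    (hlip : ∀ x y, spNorm (Hf x - Hf y) ≤ L * ‖x - y‖)
    (x0 e : EuclideanSpace ℝ (Fin n)) :
    |f (x0 + e) + f (x0 - e) - 2 * f x0 - ⟪e, toEuclideanCLM (𝕜 := ℝ) (Hf x0) e⟫|
      ≤ L / 3 * ‖e‖ ^ 3 := by
  set q : ℝ → ℝ := fun t => ⟪e, toEuclideanCLM (𝕜 := ℝ) (Hf (x0 + t • e)) e⟫ with hq
  set ψ : ℝ → ℝ := fun t => ⟪e, g (x0 + t • e)⟫ with hψdef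
  set Φ : ℝ → ℝ := fun t => f (x0 + t • e) with hΦdef
  have hline : ∀ t : ℝ, HasDerivAt (fun s : ℝ => x0 + s • e) e t := by
    intro t
    have h1 : HasDerivAt (fun s : ℝ => s • e) ((1:ℝ) • e) t :=
      (hasDerivAt_id t).smul_const e
    rw [one_smul] at h1
    exact h1.const_add x0
  -- derivative of ψ is q
  have hψ : ∀ t : ℝ, HasDerivAt ψ (q t) t := by
    intro t
    have hg : HasDerivAt (fun s : ℝ => g (x0 + s • e))
        (toEuclideanCLM (𝕜 := ℝ) (Hf (x0 + t • e)) e) t :=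
      (hhess (x0 + t • e)).comp_hasDerivAt t (hline t)
    have := (innerSL ℝ e).hasFDerivAt.comp_hasDerivAt t hg
    exact this
  -- derivative of Φ is ψ
  have hΦ : ∀ t : ℝ, HasDerivAt Φ (ψ t) t := by
    intro t
    have h := (hgrad (x0 + t • e)).hasFDerivAt.comp_hasDerivAt t (hline t)
    have he : ψ t = (InnerProductSpace.toDual ℝ _ (g (x0 + t • e))) e := by
      rw [InnerProductSpace.toDual_apply_apply, real_inner_comm]
    rw [he]; exact h
  -- q variation bound
  have hqvar : ∀ s t : ℝ, |q t - q s| ≤ L * ‖e‖ ^ 3 * |t - s| := by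
    intro s t
    have hsub : q t - q s = ⟪e, toEuclideanCLM (𝕜 := ℝ)
        (Hf (x0 + t • e) - Hf (x0 + s • e)) e⟫ := by
      rw [map_sub, ContinuousLinearMap.sub_apply, inner_sub_right]
    rw [hsub]
    calc |⟪e, toEuclideanCLM (𝕜 := ℝ) (Hf (x0 + t • e) - Hf (x0 + s • e)) e⟫|
        ≤ ‖e‖ * ‖toEuclideanCLM (𝕜 := ℝ) (Hf (x0 + t • e) - Hf (x0 + s • e)) e‖ :=
          abs_real_inner_le_norm _ _
      _ ≤ ‖e‖ * (spNorm (Hf (x0 + t • e) - Hf (x0 + s • e)) * ‖e‖) :=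
          mul_le_mul_of_nonneg_left (clm_norm_le _ e) (norm_nonneg e)
      _ ≤ ‖e‖ * (L * ‖(x0 + t • e) - (x0 + s • e)‖ * ‖e‖) := by
          have := hlip (x0 + t • e) (x0 + s • e)
          exact mul_le_mul_of_nonneg_left
            (mul_le_mul_of_nonneg_right this (norm_nonneg e)) (norm_nonneg e)
      _ = L * ‖e‖ ^ 3 * |t - s| := by
          have : (x0 + t • e) - (x0 + s • e) = (t - s) • e := by
            rw [sub_smul]; abel
          rw [this, norm_smul, Real.norm_eq_abs]
          ring
  -- q is Lipschitz hence continuous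
  have hqcont : Continuous q := by
    have hlw : LipschitzWith (L * ‖e‖ ^ 3).toNNReal q := by
      apply LipschitzWith.of_dist_le_mul
      intro t s
      rw [Real.dist_eq, Real.dist_eq]
      refine (hqvar s t).trans ?_
      have h1 : L * ‖e‖ ^ 3 ≤ ((L * ‖e‖ ^ 3).toNNReal : ℝ) := Real.le_coe_toNNReal _
      exact mul_le_mul_of_nonneg_right h1 (abs_nonneg _)
    exact hlw.continuous
  have hψcont : Continuous ψ := continuous_iff_continuousAt.2 fun t => (hψ t).continuousAt
  set h : ℝ → ℝ := fun t => ψ t - ψ (-t) - 2 * q 0 * t with hhdef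
  have hh : ∀ t : ℝ, HasDerivAt h (q t + q (-t) - 2 * q 0) t := by
    intro t
    have h1 : HasDerivAt (fun s : ℝ => ψ (-s)) (-q (-t)) t := by
      have := (hψ (-t)).comp t (hasDerivAt_neg t); simp at this; exact this
    have h2 : HasDerivAt (fun s : ℝ => 2 * q 0 * s) (2 * q 0) t := by
      simpa using (hasDerivAt_id t).const_mul (2 * q 0)
    have h3 := ((hψ t).sub h1).sub h2
    exact h3.congr_deriv (by ring)
  have hh'cont : Continuous (fun t => q t + q (-t) - 2 * q 0) :=
    (hqcont.add (hqcont.comp continuous_neg)).sub continuous_const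
  have hhcont : Continuous h := continuous_iff_continuousAt.2 fun t => (hh t).continuousAt
  have hhbound : ∀ t : ℝ, 0 ≤ t → |h t| ≤ L * ‖e‖ ^ 3 * t ^ 2 := by
    intro t ht
    have hint : ∫ s in (0:ℝ)..t, (q s + q (-s) - 2 * q 0) = h t - h 0 :=
      intervalIntegral.integral_eq_sub_of_hasDerivAt (fun s _ => hh s) (hh'cont.intervalIntegrable 0 t)
    have h0 : h 0 = 0 := by simp [hhdef]
    have hb : ‖∫ s in (0:ℝ)..t, (q s + q (-s) - 2 * q 0)‖
        ≤ |∫ s in (0:ℝ)..t, 2 * (L * ‖e‖ ^ 3) * s| := by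
      apply intervalIntegral.norm_integral_le_abs_of_norm_le
      · filter_upwards [MeasureTheory.ae_restrict_mem measurableSet_uIoc] with s hs
        rw [Set.uIoc_of_le ht] at hs
        have hs0 : 0 < s := hs.1
        have b1 := hqvar 0 s
        have b2 := hqvar 0 (-s)
        rw [Real.norm_eq_abs]
        calc |q s + q (-s) - 2 * q 0| = |(q s - q 0) + (q (-s) - q 0)| := by ring_nf
          _ ≤ |q s - q 0| + |q (-s) - q 0| := abs_add_le _ _
          _ ≤ L * ‖e‖ ^ 3 * |s - 0| + L * ‖e‖ ^ 3 * |(-s) - 0| := add_le_add b1 b2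
          _ = 2 * (L * ‖e‖ ^ 3) * s := by
              rw [sub_zero, sub_zero, abs_neg, abs_of_pos hs0]; ring
      · exact (continuous_const.mul continuous_id).intervalIntegrable 0 t
    have hval : ∫ s in (0:ℝ)..t, 2 * (L * ‖e‖ ^ 3) * s = L * ‖e‖ ^ 3 * t ^ 2 := by
      rw [intervalIntegral.integral_const_mul, integral_id]
      ring
    calc |h t| = ‖∫ s in (0:ℝ)..t, (q s + q (-s) - 2 * q 0)‖ := by
          rw [hint, h0, sub_zero, Real.norm_eq_abs]
      _ ≤ |∫ s in (0:ℝ)..t, 2 * (L * ‖e‖ ^ 3) * s| := hb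
      _ = L * ‖e‖ ^ 3 * t ^ 2 := by rw [hval]; exact abs_of_nonneg (by positivity)
  have hG : ∀ t : ℝ, HasDerivAt (fun s : ℝ => Φ s + Φ (-s) - 2 * Φ 0 - q 0 * s ^ 2) (h t) t := by
    intro t
    have h1 : HasDerivAt (fun s : ℝ => Φ (-s)) (-ψ (-t)) t := by
      have := (hΦ (-t)).comp t (hasDerivAt_neg t); simp at this; exact this
    have h2 : HasDerivAt (fun s : ℝ => q 0 * s ^ 2) (q 0 * (2 * t)) t := by
      simpa using (hasDerivAt_pow 2 t).const_mul (q 0)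
    have h3 := (((hΦ t).add h1).sub_const (2 * Φ 0)).sub h2
    exact h3.congr_deriv (by simp only [hhdef]; ring)
  have hGint : ∫ t in (0:ℝ)..1, h t
      = (Φ 1 + Φ (-1) - 2 * Φ 0 - q 0 * 1 ^ 2) - (Φ 0 + Φ (-0) - 2 * Φ 0 - q 0 * 0 ^ 2) :=
    intervalIntegral.integral_eq_sub_of_hasDerivAt (fun t _ => hG t) (hhcont.intervalIntegrable 0 1)
  have hE : f (x0 + e) + f (x0 - e) - 2 * f x0 - q 0 = ∫ t in (0:ℝ)..1, h t := by
    rw [hGint]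
    have e1 : Φ 1 = f (x0 + e) := by simp [hΦdef]
    have e2 : Φ (-1) = f (x0 - e) := by
      have : x0 + (-1 : ℝ) • e = x0 - e := by
        rw [neg_smul, one_smul, ← sub_eq_add_neg]
      simp only [hΦdef, this]
    have e0 : Φ 0 = f x0 := by simp [hΦdef]
    rw [e1, e2, neg_zero, e0]; ring
  have hfinal : |∫ t in (0:ℝ)..1, h t| ≤ L / 3 * ‖e‖ ^ 3 := by
    have hb : ‖∫ t in (0:ℝ)..1, h t‖ ≤ |∫ t in (0:ℝ)..1, L * ‖e‖ ^ 3 * t ^ 2| := by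
      apply intervalIntegral.norm_integral_le_abs_of_norm_le
      · filter_upwards [MeasureTheory.ae_restrict_mem measurableSet_uIoc] with s hs
        rw [Set.uIoc_of_le zero_le_one] at hs
        rw [Real.norm_eq_abs]
        exact hhbound s (le_of_lt hs.1)
      · exact (continuous_const.mul (continuous_pow 2)).intervalIntegrable 0 1
    rw [Real.norm_eq_abs] at hb
    refine hb.trans ?_
    have hval : ∫ t in (0:ℝ)..1, L * ‖e‖ ^ 3 * t ^ 2 = L / 3 * ‖e‖ ^ 3 := by
      rw [intervalIntegral.integral_const_mul, integral_pow]
      norm_num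
      ring
    rw [hval]
    exact le_of_eq (abs_of_nonneg (by positivity))
  have hq0 : q 0 = ⟪e, toEuclideanCLM (𝕜 := ℝ) (Hf x0) e⟫ := by
    simp [hq]
  rw [← hq0]
  rw [hE]
  exact hfinal


lemma dot_eq_inner_clm {n : ℕ} (A : Matrix (Fin n) (Fin n) ℝ) (u : Eu n) :
    u ⬝ᵥ A.mulVec u = ⟪u, toEuclideanCLM (𝕜 := ℝ) A u⟫ := by
  rw [PiLp.inner_apply]
  simp only [RCLike.inner_apply, conj_trivial]
  rw [dotProduct]; exact Finset.sum_congr rfl fun x _ => mul_comm _ _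

theorem stmt_10 {n p : ℕ} (f : Eu n → ℝ) (g : Eu n → Eu n)
    (Hf : Eu n → Matrix (Fin n) (Fin n) ℝ) (L : ℝ) (hL : 0 ≤ L)
    (hgrad : ∀ x, HasGradientAt f (g x) x)
    (hhess : ∀ x, HasFDerivAt g (Matrix.toEuclideanCLM (𝕜 := ℝ) (Hf x)) x)
    (hlip : ∀ x y, spNorm (Hf x - Hf y) ≤ L * ‖x - y‖)
    (x0 : Eu n) (d : Fin p → Eu n) (hd : ∀ i, d i ≠ 0)
    (α : Fin n → ℝ) (H : Matrix (Fin n) (Fin n) ℝ) (hH : H.IsSymm)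
    (hint1 : ∀ i, (d i) ⬝ᵥ α + (1/2) * ((d i) ⬝ᵥ H.mulVec (d i))
        = f (x0 + d i) - f x0)
    (hint2 : ∀ i, -((d i) ⬝ᵥ α) + (1/2) * ((d i) ⬝ᵥ H.mulVec (d i))
        = f (x0 - d i) - f x0)
    (i : Fin p) :
    |(‖d i‖⁻¹ • d i) ⬝ᵥ (H - Hf x0).mulVec (‖d i‖⁻¹ • d i)|
      ≤ L / 3 * ⨆ j, ‖d j‖ := by
  set e : Eu n := d i with he
  have hc : (0:ℝ) < ‖e‖ := norm_pos_iff.2 (hd i)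
  have hcinv : (0:ℝ) ≤ ‖e‖⁻¹ := inv_nonneg.2 (le_of_lt hc)
  have hsum : e ⬝ᵥ H.mulVec e = f (x0 + e) + f (x0 - e) - 2 * f x0 := by
    have h1 := hint1 i
    have h2 := hint2 i
    rw [← he] at h1 h2
    linarith
  have hcore := taylor_core f g Hf L hL hgrad hhess hlip x0 e
  have hsup : ‖e‖ ≤ ⨆ j, ‖d j‖ :=
    le_ciSup (Set.Finite.bddAbove (Set.finite_range fun j => ‖d j‖)) i
  calc |(‖e‖⁻¹ • e) ⬝ᵥ (H - Hf x0).mulVec (‖e‖⁻¹ • e)|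
      = |⟪(‖e‖⁻¹ • e : Eu n), toEuclideanCLM (𝕜 := ℝ) (H - Hf x0) ((‖e‖⁻¹ • e : Eu n))⟫| := by
        exact congrArg abs (dot_eq_inner_clm (H - Hf x0) (‖e‖⁻¹ • e))
    _ = ‖e‖⁻¹ * ‖e‖⁻¹ * |⟪e, toEuclideanCLM (𝕜 := ℝ) (H - Hf x0) e⟫| := by
        rw [ContinuousLinearMap.map_smul, real_inner_smul_left, real_inner_smul_right,
          abs_mul, abs_mul, abs_of_nonneg hcinv]
        ring
    _ = ‖e‖⁻¹ * ‖e‖⁻¹ * |f (x0 + e) + f (x0 - e) - 2 * f x0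
          - ⟪e, toEuclideanCLM (𝕜 := ℝ) (Hf x0) e⟫| := by
        congr 1
        rw [map_sub, ContinuousLinearMap.sub_apply, inner_sub_right, ← dot_eq_inner_clm, hsum]
    _ ≤ ‖e‖⁻¹ * ‖e‖⁻¹ * (L / 3 * ‖e‖ ^ 3) := by
        exact mul_le_mul_of_nonneg_left hcore (by positivity)
    _ = L / 3 * ‖e‖ := by
        field_simp
    _ ≤ L / 3 * ⨆ j, ‖d j‖ := by
        exact mul_le_mul_of_nonneg_left hsup (by positivity)
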